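/- arXiv:0803.3598 — 2 statements merged into one kernel-verified Lean document; each statement's English description precedes it below -/
import Mathlib

section
/- Let (B, {A_t, φ_t}_{t∈T}) be a continuous field of JB-algebras over a locally compact Hausdorff space T. Suppose x ∈ ∏_{t∈T} A_t is such that: (a) for every s ∈ T and every ε > 0 there exist y_s ∈ B and a neighborhood V_s of s with ‖x_t − φ_t(y_s)‖ < ε for all t ∈ V_s, and (b) ‖x_t‖ → 0 as t → ∞ (i.e., for every ε > 0 there is a compact K ⊆ T with ‖x_t‖ < ε for t ∉ K). Then x is a section of the field, i.e., there exists y ∈ B with x_t = φ_t(y) for all t ∈ T. -/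
open scoped ZeroAtInfty

/-- A JB-algebra: a real Banach space with a commutative bilinear (Jordan)
multiplication making it a Banach algebra, satisfying `‖x²‖ = ‖x‖²` and
`‖x‖² ≤ ‖x² + y²‖`. -/
class JBAlgebra (A : Type*) extends NormedAddCommGroup A, Mul A where
  [toNormedSpace : NormedSpace ℝ A]
  [toCompleteSpace : CompleteSpace A]
  mul_comm' : ∀ x y : A, x * y = y * x
  add_mul' : ∀ x y z : A, (x + y) * z = x * z + y * z
  smul_mul' : ∀ (r : ℝ) (x y : A), (r • x) * y = r • (x * y)
  norm_mul_le' : ∀ x y : A, ‖x * y‖ ≤ ‖x‖ * ‖y‖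
  norm_sq' : ∀ x : A, ‖x * x‖ = ‖x‖ ^ 2
  norm_sq_add' : ∀ x y : A, ‖x‖ ^ 2 ≤ ‖x * x + y * y‖

attribute [instance] JBAlgebra.toNormedSpace JBAlgebra.toCompleteSpace

/-- A Jordan homomorphism between JB-algebras: real-linear and multiplicative. -/
def IsJordanHom {A B : Type*} [JBAlgebra A] [JBAlgebra B] (f : A → B) : Prop :=
  (∀ x y, f (x + y) = f x + f y) ∧ (∀ (r : ℝ) (x : A), f (r • x) = r • f x) ∧
    (∀ x y, f (x * y) = f x * f y)

/-- A continuous field of JB-algebras over `T`. -/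
structure IsContinuousFieldOfJB {T : Type*} [TopologicalSpace T]
    (B : Type*) [JBAlgebra B] (A : T → Type*) [∀ t, JBAlgebra (A t)]
    (φ : ∀ t, B → A t) : Prop where
  hom : ∀ t, IsJordanHom (φ t)
  surj : ∀ t, Function.Surjective (φ t)
  c0 : ∀ x : B, ∃ f : C₀(T, ℝ), ∀ t, f t = ‖φ t x‖
  norm_eq : ∀ x : B, ‖x‖ = ⨆ t, ‖φ t x‖
  module : ∀ (f : C₀(T, ℝ)) (x : B), ∃ fx : B, ∀ t, φ t fx = f t • φ t x

section Aux

variable {T : Type*} [TopologicalSpace T] {B : Type*} [JBAlgebra B]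
  {A : T → Type*} [∀ t, JBAlgebra (A t)] {φ : ∀ t, B → A t}

lemma IsJordanHom.map_zero' {A₁ A₂ : Type*} [JBAlgebra A₁] [JBAlgebra A₂] {f : A₁ → A₂}
    (hf : IsJordanHom f) : f 0 = 0 := by
  have h := hf.2.1 0 0
  simpa using h

lemma IsJordanHom.map_sub' {A₁ A₂ : Type*} [JBAlgebra A₁] [JBAlgebra A₂] {f : A₁ → A₂}
    (hf : IsJordanHom f) (a b : A₁) : f (a - b) = f a - f b := by
  have h1 : a - b = a + (-1 : ℝ) • b := by
    rw [neg_one_smul]; abel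
  rw [h1, hf.1, hf.2.1, neg_one_smul]
  abel

lemma IsJordanHom.map_sum' {A₁ A₂ : Type*} [JBAlgebra A₁] [JBAlgebra A₂] {f : A₁ → A₂}
    (hf : IsJordanHom f) {ι : Type*} (s : Finset ι) (z : ι → A₁) :
    f (∑ i ∈ s, z i) = ∑ i ∈ s, f (z i) := by
  classical
  induction s using Finset.induction with
  | empty => simpa using hf.map_zero'
  | insert _ _ hns ih =>
    rw [Finset.sum_insert hns, Finset.sum_insert hns, hf.1, ih]

lemma norm_phi_le (hfield : IsContinuousFieldOfJB B A φ) (b : B) (t : T) :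
    ‖φ t b‖ ≤ ‖b‖ := by
  obtain ⟨f, hf⟩ := hfield.c0 b
  rw [hfield.norm_eq b]
  refine le_ciSup (f := fun t => ‖φ t b‖) ⟨‖f.toBCF‖, ?_⟩ t
  rintro r ⟨s, rfl⟩
  calc ‖φ s b‖ = f s := (hf s).symm
    _ ≤ ‖f.toBCF s‖ := le_abs_self _
    _ ≤ ‖f.toBCF‖ := BoundedContinuousFunction.norm_coe_le_norm _ _

lemma norm_le_of_forall (hfield : IsContinuousFieldOfJB B A φ) {b : B} {c : ℝ}
    (hc : 0 ≤ c) (h : ∀ t, ‖φ t b‖ ≤ c) : ‖b‖ ≤ c := by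
  rw [hfield.norm_eq b]
  exact Real.iSup_le h hc

lemma approx_section [LocallyCompactSpace T] [T2Space T]
    (hfield : IsContinuousFieldOfJB B A φ) (x : ∀ t, A t)
    (happrox : ∀ s : T, ∀ ε > (0 : ℝ), ∃ ys : B, ∃ V ∈ nhds s,
      ∀ t ∈ V, ‖x t - φ t ys‖ < ε)
    (hvanish : ∀ ε > (0 : ℝ), ∃ K : Set T, IsCompact K ∧ ∀ t ∉ K, ‖x t‖ < ε)
    {ε : ℝ} (hε : 0 < ε) : ∃ y : B, ∀ t, ‖x t - φ t y‖ ≤ ε := by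
  classical
  obtain ⟨K, hK, hKx⟩ := hvanish (ε / 2) (by linarith)
  choose ys V hV hys using fun s : T => happrox s (ε / 2) (by linarith)
  obtain ⟨F, hF⟩ := hK.elim_nhds_subcover (fun s => interior (V s))
    (fun s _ => interior_mem_nhds.mpr (hV s))
  set U : {s // s ∈ F} → Set T := fun i => interior (V i.1) with hU
  have hcover : K ⊆ ⋃ i, U i := by
    refine hF.2.trans ?_
    intro t ht
    simp only [Set.mem_iUnion] at ht ⊢
    obtain ⟨s, hs, hts⟩ := ht
    exact ⟨⟨s, hs⟩, hts⟩
  obtain ⟨p, hsub, hcp⟩ := PartitionOfUnity.exists_isSubordinate_of_locallyFinite_t2space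
    hK U (fun _ => isOpen_interior) (locallyFinite_of_finite _) hcover
  have hpz : ∀ i : {s // s ∈ F}, Filter.Tendsto (p i) (Filter.cocompact T) (nhds 0) :=
    fun i => (hcp i).is_zero_at_infty
  set g : {s // s ∈ F} → C₀(T, ℝ) := fun i => ⟨p i, hpz i⟩ with hg
  choose z hz using fun i : {s // s ∈ F} => hfield.module (g i) (ys i.1)
  refine ⟨∑ i, z i, fun t => ?_⟩
  have hφy : φ t (∑ i, z i) = ∑ i, (p i t) • φ t (ys i.1) := by
    rw [(hfield.hom t).map_sum']
    exact Finset.sum_congr rfl fun i _ => hz i t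
  set S : ℝ := ∑ i, p i t with hS
  have hS_le_one : S ≤ 1 := by
    have := p.sum_le_one t
    rwa [finsum_eq_sum_of_fintype] at this
  have hS_nonneg : 0 ≤ S := Finset.sum_nonneg fun i _ => p.nonneg i t
  have key : x t - φ t (∑ i, z i) = (1 - S) • x t + ∑ i, (p i t) • (x t - φ t (ys i.1)) := by
    rw [hφy]
    simp only [smul_sub, Finset.sum_sub_distrib, ← Finset.sum_smul, ← hS, sub_smul, one_smul]
    abel
  have hterm : ∀ i : {s // s ∈ F}, ‖(p i t) • (x t - φ t (ys i.1))‖ ≤ p i t * (ε / 2) := by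
    intro i
    rw [norm_smul, Real.norm_eq_abs, abs_of_nonneg (p.nonneg i t)]
    by_cases hpi : p i t = 0
    · simp [hpi]
    · have ht : t ∈ V i.1 := interior_subset (hsub i (subset_tsupport _ hpi))
      exact mul_le_mul_of_nonneg_left (le_of_lt (hys i.1 t ht)) (p.nonneg i t)
  have hfirst : ‖(1 - S) • x t‖ ≤ (1 - S) * (ε / 2) := by
    rw [norm_smul, Real.norm_eq_abs, abs_of_nonneg (by linarith)]
    by_cases ht : t ∈ K
    · have : S = 1 := by
        have := p.sum_eq_one ht
        rwa [finsum_eq_sum_of_fintype] at this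
      simp [this]
    · exact mul_le_mul_of_nonneg_left (le_of_lt (hKx t ht)) (by linarith)
  calc ‖x t - φ t (∑ i, z i)‖
      = ‖(1 - S) • x t + ∑ i, (p i t) • (x t - φ t (ys i.1))‖ := by rw [key]
    _ ≤ ‖(1 - S) • x t‖ + ‖∑ i, (p i t) • (x t - φ t (ys i.1))‖ := norm_add_le _ _
    _ ≤ (1 - S) * (ε / 2) + ∑ i, ‖(p i t) • (x t - φ t (ys i.1))‖ :=
        add_le_add hfirst (norm_sum_le _ _)
    _ ≤ (1 - S) * (ε / 2) + ∑ i, p i t * (ε / 2) :=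
        add_le_add_right (Finset.sum_le_sum fun i _ => hterm i) _
    _ = (1 - S) * (ε / 2) + S * (ε / 2) := by rw [← Finset.sum_mul, ← hS]
    _ = ε / 2 := by ring
    _ ≤ ε := by linarith

end Aux

/-- Local uniform approximability by sections together with vanishing at
infinity implies being a section. -/
theorem stmt4 {T : Type*} [TopologicalSpace T] [LocallyCompactSpace T] [T2Space T]
    {B : Type*} [JBAlgebra B] {A : T → Type*} [∀ t, JBAlgebra (A t)]
    (φ : ∀ t, B → A t) (hfield : IsContinuousFieldOfJB B A φ)
    (x : ∀ t, A t)
    (happrox : ∀ s : T, ∀ ε > (0 : ℝ), ∃ ys : B, ∃ V ∈ nhds s,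
      ∀ t ∈ V, ‖x t - φ t ys‖ < ε)
    (hvanish : ∀ ε > (0 : ℝ), ∃ K : Set T, IsCompact K ∧ ∀ t ∉ K, ‖x t‖ < ε) :
    ∃ y : B, ∀ t, x t = φ t y := by
  have happroxall : ∀ n : ℕ, ∃ y : B, ∀ t, ‖x t - φ t y‖ ≤ (1 / 2 : ℝ) ^ n := fun n =>
    approx_section hfield x happrox hvanish (pow_pos (by norm_num) n)
  choose y hy using happroxall
  have hdist : ∀ N n m : ℕ, N ≤ n → N ≤ m → dist (y n) (y m) ≤ 2 * (1 / 2 : ℝ) ^ N := by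
    intro N n m hn hm
    rw [dist_eq_norm]
    have hb : ∀ t, ‖φ t (y n - y m)‖ ≤ 2 * (1 / 2 : ℝ) ^ N := by
      intro t
      rw [(hfield.hom t).map_sub']
      have h1 : ‖φ t (y n) - φ t (y m)‖ ≤ ‖x t - φ t (y n)‖ + ‖x t - φ t (y m)‖ := by
        have := norm_sub_le_norm_sub_add_norm_sub (φ t (y n)) (x t) (φ t (y m))
        rwa [norm_sub_rev (φ t (y n)) (x t)] at this
      have h2 : (1 / 2 : ℝ) ^ n ≤ (1 / 2 : ℝ) ^ N :=
        pow_le_pow_of_le_one (by norm_num) (by norm_num) hn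
      have h3 : (1 / 2 : ℝ) ^ m ≤ (1 / 2 : ℝ) ^ N :=
        pow_le_pow_of_le_one (by norm_num) (by norm_num) hm
      have := add_le_add (hy n t) (hy m t)
      linarith
    exact norm_le_of_forall hfield (by positivity) hb
  have hcauchy : CauchySeq y := by
    refine cauchySeq_of_le_tendsto_0 (fun N => 2 * (1 / 2 : ℝ) ^ N)
      (fun n m N hn hm => hdist N n m hn hm) ?_
    have := tendsto_pow_atTop_nhds_zero_of_lt_one (by norm_num : (0:ℝ) ≤ 1/2) (by norm_num)
    simpa using this.const_mul 2
  obtain ⟨z, hz⟩ := cauchySeq_tendsto_of_complete hcauchy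
  refine ⟨z, fun t => ?_⟩
  have hle : ∀ n, ‖x t - φ t z‖ ≤ (1 / 2 : ℝ) ^ n + ‖y n - z‖ := by
    intro n
    have h2 : ‖φ t (y n) - φ t z‖ ≤ ‖y n - z‖ := by
      rw [← (hfield.hom t).map_sub']
      exact norm_phi_le hfield _ t
    have h1 := norm_sub_le_norm_sub_add_norm_sub (x t) (φ t (y n)) (φ t z)
    have := hy n t
    linarith
  have htendy : Filter.Tendsto (fun n => ‖y n - z‖) Filter.atTop (nhds 0) :=
    tendsto_iff_norm_sub_tendsto_zero.mp hz
  have htend : Filter.Tendsto (fun n => (1 / 2 : ℝ) ^ n + ‖y n - z‖) Filter.atTop (nhds 0) := by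
    have h0 := tendsto_pow_atTop_nhds_zero_of_lt_one (by norm_num : (0:ℝ) ≤ 1/2)
      (by norm_num : (1/2 : ℝ) < 1)
    simpa using h0.add htendy
  have hfinal : ‖x t - φ t z‖ ≤ 0 := ge_of_tendsto' htend hle
  have : x t - φ t z = 0 := by
    have := norm_le_zero_iff.mp hfinal
    exact this
  exact sub_eq_zero.mp this
end

section
/- Let (B, {A_t, φ_t}_{t∈T}) be a continuous field of JB-algebras over a locally compact Hausdorff space T, and let x ∈ ∏_{t∈T} A_t. If for every z ∈ B the function t ↦ ‖x_t − φ_t(z)‖ lies in C₀(T), then x is a section of the field, i.e., there exists y ∈ B with x_t = φ_t(y) for all t. -/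
open scoped ZeroAtInfty

section Stmt5Helpers

open Filter Topology

variable {A B : Type*} [JBAlgebra A] [JBAlgebra B]

lemma jhom_map_zero {f : A → B} (hf : IsJordanHom f) : f 0 = 0 := by
  have h := hf.1 0 0
  rw [add_zero] at h
  have h2 : f 0 + f 0 = f 0 + 0 := by rw [add_zero]; exact h.symm
  exact add_left_cancel h2

lemma jhom_map_sub {f : A → B} (hf : IsJordanHom f) (a b : A) :
    f (a - b) = f a - f b := by
  have h := hf.1 (a - b) b
  rw [sub_add_cancel] at h
  rw [h]; abel

lemma jhom_map_sum {f : A → B} (hf : IsJordanHom f) {ι : Type*} (s : Finset ι)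
    (g : ι → A) : f (∑ i ∈ s, g i) = ∑ i ∈ s, f (g i) := by
  classical
  induction s using Finset.induction with
  | empty => simpa using jhom_map_zero hf
  | insert _ _ hi ih =>
    rw [Finset.sum_insert hi, Finset.sum_insert hi, hf.1, ih]

end Stmt5Helpers

/-- If `t ↦ ‖x t - φ t z‖` lies in `C₀(T)` for every `z ∈ B`, then `x` is a
section of the continuous field. -/
theorem stmt5 {T : Type*} [TopologicalSpace T] [LocallyCompactSpace T] [T2Space T]
    {B : Type*} [JBAlgebra B] {A : T → Type*} [∀ t, JBAlgebra (A t)]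
    (φ : ∀ t, B → A t) (hfield : IsContinuousFieldOfJB B A φ)
    (x : ∀ t, A t)
    (hx : ∀ z : B, ∃ f : C₀(T, ℝ), ∀ t, f t = ‖x t - φ t z‖) :
    ∃ y : B, ∀ t, x t = φ t y := by
  classical
  obtain ⟨hhom, hsurj, hc0, hnorm, hmod⟩ := hfield
  -- every `φ t` is norm-nonincreasing
  have hb : ∀ w : B, BddAbove (Set.range fun t => ‖φ t w‖) := by
    intro w
    obtain ⟨f, hf⟩ := hc0 w
    refine ⟨‖f‖, ?_⟩
    rintro r ⟨t, rfl⟩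
    show ‖φ t w‖ ≤ ‖f‖
    rw [← hf t]
    calc f t ≤ ‖f.toBCF t‖ := by simpa using le_abs_self (f t)
      _ ≤ ‖f.toBCF‖ := f.toBCF.norm_coe_le_norm t
      _ = ‖f‖ := ZeroAtInftyContinuousMap.norm_toBCF_eq_norm
  have hφle : ∀ (t : T) (w : B), ‖φ t w‖ ≤ ‖w‖ := by
    intro t w
    rw [hnorm w]
    exact le_ciSup (hb w) t
  -- approximation by genuine sections
  have approx : ∀ ε : ℝ, 0 < ε → ∃ z : B, ∀ t, ‖x t - φ t z‖ ≤ ε := by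
    intro ε hε
    obtain ⟨f0, hf0⟩ := hx 0
    have hx0 : ∀ t, f0 t = ‖x t‖ := by
      intro t; rw [hf0 t, jhom_map_zero (hhom t), sub_zero]
    have hcc : Filter.Tendsto f0 (Filter.cocompact T) (nhds 0) := f0.zero_at_infty'
    have hev : ∀ᶠ t in Filter.cocompact T, |f0 t| < ε := by
      have h' := Metric.tendsto_nhds.mp hcc ε hε
      filter_upwards [h'] with t ht
      simpa [Real.dist_eq] using ht
    obtain ⟨K, hKc, hKsub⟩ := Filter.mem_cocompact.mp hev
    -- pointwise sections
    choose zt hzt using fun t : T => hsurj t (x t)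
    set V : T → Set T := fun s => {t | ‖x t - φ t (zt s)‖ < ε} with hV
    have hVopen : ∀ s, IsOpen (V s) := by
      intro s
      obtain ⟨g, hg⟩ := hx (zt s)
      have hVg : V s = (fun t => g t) ⁻¹' Set.Iio ε := by
        ext t; simp [hV, hg t]
      rw [hVg]
      exact IsOpen.preimage (map_continuous g) isOpen_Iio
    have hmem : ∀ s, s ∈ V s := by
      intro s; simp [hV, hzt s, hε]
    obtain ⟨I, hI⟩ := hKc.elim_finite_subcover V hVopen
      (fun s _ => Set.mem_iUnion.mpr ⟨s, hmem s⟩)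
    have hIcover : K ⊆ ⋃ i : I, V (i : T) := by
      intro a ha
      rcases Set.mem_iUnion₂.mp (hI ha) with ⟨i, hi, hv⟩
      exact Set.mem_iUnion.mpr ⟨⟨i, hi⟩, hv⟩
    obtain ⟨p, hpsub, hpcp⟩ :=
      PartitionOfUnity.exists_isSubordinate_of_locallyFinite_t2space hKc
        (fun i : I => V (i : T)) (fun i => hVopen _) (locallyFinite_of_finite _) hIcover
    have hfx : ∀ i : I, ∃ w : B, ∀ t, φ t w = p i t • φ t (zt (i : T)) := by
      intro i
      exact hmod ⟨p i, (hpcp i).is_zero_at_infty⟩ (zt (i : T))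
    choose w hw using hfx
    refine ⟨∑ i : I, w i, fun t => ?_⟩
    have hφsum : φ t (∑ i : I, w i) = ∑ i : I, p i t • φ t (zt (i : T)) := by
      rw [jhom_map_sum (hhom t)]
      exact Finset.sum_congr rfl fun i _ => hw i t
    set S := ∑ i : I, p i t with hS
    have hS1 : S ≤ 1 := by
      rw [hS, ← finsum_eq_sum_of_fintype]; exact p.sum_le_one t
    have hS0 : (0 : ℝ) ≤ S := Finset.sum_nonneg fun i _ => p.nonneg i t
    have key : x t - φ t (∑ i : I, w i)
        = (1 - S) • x t + ∑ i : I, p i t • (x t - φ t (zt (i : T))) := by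
      rw [hφsum, sub_smul, one_smul]
      rw [Finset.sum_congr rfl (fun i (_ : i ∈ Finset.univ) =>
        smul_sub (p i t) (x t) (φ t (zt (i : T))))]
      rw [Finset.sum_sub_distrib, ← Finset.sum_smul, ← hS]
      abel
    have h1 : ‖(1 - S) • x t‖ ≤ (1 - S) * ε := by
      by_cases ht : t ∈ K
      · have hSeq : S = 1 := by
          rw [hS, ← finsum_eq_sum_of_fintype]; exact p.sum_eq_one ht
        simp [hSeq]
      · have hxt : ‖x t‖ ≤ ε := by
          have h' := hKsub ht
          simp only [Set.mem_setOf_eq] at h'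
          rw [hx0 t] at h'
          calc ‖x t‖ ≤ |‖x t‖| := le_abs_self _
            _ ≤ ε := le_of_lt h'
        rw [norm_smul, Real.norm_eq_abs, abs_of_nonneg (by linarith)]
        exact mul_le_mul_of_nonneg_left hxt (by linarith)
    have h2 : ‖∑ i : I, p i t • (x t - φ t (zt (i : T)))‖ ≤ S * ε := by
      calc ‖∑ i : I, p i t • (x t - φ t (zt (i : T)))‖
          ≤ ∑ i : I, ‖p i t • (x t - φ t (zt (i : T)))‖ := norm_sum_le _ _
        _ ≤ ∑ i : I, p i t * ε := by
            refine Finset.sum_le_sum fun i _ => ?_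
            rw [norm_smul, Real.norm_eq_abs, abs_of_nonneg (p.nonneg i t)]
            by_cases hp0 : p i t = 0
            · simp [hp0]
            · have htV : t ∈ V (i : T) := by
                apply hpsub i
                exact subset_tsupport _ hp0
              exact mul_le_mul_of_nonneg_left (le_of_lt htV) (p.nonneg i t)
        _ = S * ε := by rw [hS, Finset.sum_mul]
    calc ‖x t - φ t (∑ i : I, w i)‖
        = ‖(1 - S) • x t + ∑ i : I, p i t • (x t - φ t (zt (i : T)))‖ := by rw [key]
      _ ≤ ‖(1 - S) • x t‖ + ‖∑ i : I, p i t • (x t - φ t (zt (i : T)))‖ := norm_add_le _ _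
      _ ≤ (1 - S) * ε + S * ε := add_le_add h1 h2
      _ = ε := by ring
  -- build a Cauchy sequence of sections
  have approx' : ∀ n : ℕ, ∃ z : B, ∀ t, ‖x t - φ t z‖ ≤ (1/2 : ℝ) ^ n :=
    fun n => approx _ (by positivity)
  choose z hz using approx'
  have hdist : ∀ n m N : ℕ, N ≤ n → N ≤ m →
      dist (z n) (z m) ≤ 2 * (1/2 : ℝ) ^ N := by
    intro n m N hn hm
    have hhalf : ∀ k l : ℕ, l ≤ k → (1/2 : ℝ) ^ k ≤ (1/2 : ℝ) ^ l := fun k l hl =>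
      pow_le_pow_of_le_one (by norm_num) (by norm_num) hl
    rw [dist_eq_norm, hnorm (z n - z m)]
    refine Real.iSup_le (fun t => ?_) (by positivity)
    rw [jhom_map_sub (hhom t)]
    have heq : φ t (z n) - φ t (z m) = (x t - φ t (z m)) - (x t - φ t (z n)) := by abel
    calc ‖φ t (z n) - φ t (z m)‖
        = ‖(x t - φ t (z m)) - (x t - φ t (z n))‖ := by rw [heq]
      _ ≤ ‖x t - φ t (z m)‖ + ‖x t - φ t (z n)‖ := norm_sub_le _ _
      _ ≤ (1/2 : ℝ) ^ m + (1/2 : ℝ) ^ n := add_le_add (hz m t) (hz n t)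
      _ ≤ (1/2 : ℝ) ^ N + (1/2 : ℝ) ^ N := add_le_add (hhalf m N hm) (hhalf n N hn)
      _ = 2 * (1/2 : ℝ) ^ N := by ring
  have hpow0 : Filter.Tendsto (fun N : ℕ => (1/2 : ℝ) ^ N) Filter.atTop (nhds 0) :=
    tendsto_pow_atTop_nhds_zero_of_lt_one (by norm_num) (by norm_num)
  have hcs : CauchySeq z :=
    cauchySeq_of_le_tendsto_0 _ hdist (by simpa using hpow0.const_mul 2)
  obtain ⟨y, hy⟩ := cauchySeq_tendsto_of_complete hcs
  refine ⟨y, fun t => ?_⟩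
  have hle : ∀ n : ℕ, ‖x t - φ t y‖ ≤ (1/2 : ℝ) ^ n + ‖z n - y‖ := by
    intro n
    have heq : x t - φ t y = (x t - φ t (z n)) + (φ t (z n) - φ t y) := by abel
    calc ‖x t - φ t y‖
        = ‖(x t - φ t (z n)) + (φ t (z n) - φ t y)‖ := by rw [heq]
      _ ≤ ‖x t - φ t (z n)‖ + ‖φ t (z n) - φ t y‖ := norm_add_le _ _
      _ ≤ (1/2 : ℝ) ^ n + ‖z n - y‖ := by
          refine add_le_add (hz n t) ?_
          rw [← jhom_map_sub (hhom t)]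
          exact hφle t _
  have htend : Filter.Tendsto (fun n : ℕ => (1/2 : ℝ) ^ n + ‖z n - y‖)
      Filter.atTop (nhds 0) := by
    have hpow : Filter.Tendsto (fun n : ℕ => (1/2 : ℝ) ^ n) Filter.atTop (nhds 0) :=
      tendsto_pow_atTop_nhds_zero_of_lt_one (by norm_num) (by norm_num)
    have hzn : Filter.Tendsto (fun n : ℕ => ‖z n - y‖) Filter.atTop (nhds 0) := by
      have := (hy.sub_const y).norm
      simpa using this
    simpa using hpow.add hzn
  have h0 : ‖x t - φ t y‖ ≤ 0 := ge_of_tendsto' htend hle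
  have hzero : x t - φ t y = 0 :=
    norm_eq_zero.mp (le_antisymm h0 (norm_nonneg _))
  exact sub_eq_zero.mp hzero
end
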